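/- With t_d(s) defined by 1 - Σ_{d≥1} θ^{d-1} t_d(s) = exp(- Σ_{a≥0} θ^a s_a), for all d ≥ a+1 ≥ 2 one has ∂t_d/∂s_{a-1} = ∂t_{d+1}/∂s_a. -/

import Mathlib

noncomputable section
open MvPowerSeries
open scoped Classical

/-- total degree of a monomial -/
def mdeg {σ : Type*} (m : σ →₀ ℕ) : ℕ := m.sum fun _ n => n

/-- formal partial derivative with respect to the variable `i` -/
def pd {σ : Type*} {R : Type*} [CommRing R] (i : σ) (f : MvPowerSeries σ R) :
    MvPowerSeries σ R :=
  fun m => ((m i + 1 : ℕ) : R) * MvPowerSeries.coeff (m + Finsupp.single i 1) f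

/-- formal exponential of a power series (coefficientwise stable sum) -/
def fexp {σ : Type*} {A : Type*} [CommRing A] [Algebra ℚ A] (u : MvPowerSeries σ A) :
    MvPowerSeries σ A :=
  fun m => ∑ k ∈ Finset.range (mdeg m + 1),
    (k.factorial : ℚ)⁻¹ • MvPowerSeries.coeff m (u ^ k)

/-- restriction of a monomial in the variables `θ ⊕ β` to the `β`-variables -/
def res {β : Type*} (m : (Unit ⊕ β) →₀ ℕ) : β →₀ ℕ :=
  Finsupp.comapDomain Sum.inr m Sum.inr_injective.injOn

/-- the series `1 - ∑_{d ≥ 1} θ^{d-1} t_d` -/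
def genT {β : Type*} {R : Type*} [CommRing R] (t : ℕ → MvPowerSeries β R) :
    MvPowerSeries (Unit ⊕ β) R :=
  fun m => (if m = 0 then 1 else 0) -
    MvPowerSeries.coeff (res m) (t (m (Sum.inl ()) + 1))

/-- the series `-∑_{a ≥ 0} θ^a s_a` -/
def expArg : MvPowerSeries (Unit ⊕ ℕ) ℚ :=
  fun m => ∑ᶠ a : ℕ,
    if m = Finsupp.single (Sum.inl ()) a + Finsupp.single (Sum.inr a) 1 then (-1 : ℚ) else 0

/-- the defining identity `1 - ∑_{d≥1} θ^{d-1} t_d(s) = exp(-∑_{a≥0} θ^a s_a)` -/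
def DefIdent (t : ℕ → MvPowerSeries ℕ ℚ) : Prop := genT t = fexp expArg

variable {σ : Type*} {R : Type*} [CommRing R]

lemma coeff_pd (i : σ) (f : MvPowerSeries σ R) (m : σ →₀ ℕ) :
    MvPowerSeries.coeff m (pd i f) =
      ((m i + 1 : ℕ) : R) * MvPowerSeries.coeff (m + Finsupp.single i 1) f := rfl

lemma add_single_ne_zero (i : σ) (m : σ →₀ ℕ) : m + Finsupp.single i 1 ≠ 0 := by
  intro h
  have := DFunLike.congr_fun h i
  simp [Finsupp.add_apply, Finsupp.single_apply] at this

lemma pd_one (i : σ) : pd i (1 : MvPowerSeries σ R) = 0 := by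
  ext m
  rw [coeff_pd, MvPowerSeries.coeff_one, if_neg (add_single_ne_zero i m)]
  simp

lemma shift_sum (i : σ) (m : σ →₀ ℕ) (F : (σ →₀ ℕ) → (σ →₀ ℕ) → R) :
    ∑ p ∈ (Finset.HasAntidiagonal.antidiagonal (m + Finsupp.single i 1) : Finset ((σ →₀ ℕ) × (σ →₀ ℕ))), ((p.1 i : ℕ) : R) * F p.1 p.2
      = ∑ p ∈ (Finset.HasAntidiagonal.antidiagonal m : Finset ((σ →₀ ℕ) × (σ →₀ ℕ))),
          ((p.1 i + 1 : ℕ) : R) * F (p.1 + Finsupp.single i 1) p.2 := by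
  have h1 : ∑ p ∈ (Finset.HasAntidiagonal.antidiagonal (m + Finsupp.single i 1) : Finset ((σ →₀ ℕ) × (σ →₀ ℕ))), ((p.1 i : ℕ) : R) * F p.1 p.2
      = ∑ p ∈ (Finset.HasAntidiagonal.antidiagonal (m + Finsupp.single i 1)).filter (fun p : (σ →₀ ℕ) × (σ →₀ ℕ) => p.1 i ≠ 0), ((p.1 i : ℕ) : R) * F p.1 p.2 := by
    refine (Finset.sum_filter_of_ne ?_).symm
    intro p _ h hp
    apply h
    rw [hp, Nat.cast_zero, zero_mul]
  rw [h1]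
  refine (Finset.sum_bij' (i := fun (p : (σ →₀ ℕ) × (σ →₀ ℕ)) (_ : p ∈ (Finset.HasAntidiagonal.antidiagonal m : Finset ((σ →₀ ℕ) × (σ →₀ ℕ)))) => (p.1 + Finsupp.single i 1, p.2))
      (j := fun (p : (σ →₀ ℕ) × (σ →₀ ℕ)) _ => (p.1 - Finsupp.single i 1, p.2)) ?_ ?_ ?_ ?_ ?_).symm
  · intro p hp
    simp only [Finset.mem_filter, Finset.HasAntidiagonal.mem_antidiagonal] at hp ⊢
    refine ⟨by rw [← hp, add_right_comm], ?_⟩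
    simp [Finsupp.add_apply, Finsupp.single_apply]
  · intro p hp
    simp only [Finset.mem_filter, Finset.HasAntidiagonal.mem_antidiagonal] at hp ⊢
    obtain ⟨h1, h2⟩ := hp
    have hle : Finsupp.single i 1 ≤ p.1 := by
      rw [Finsupp.single_le_iff]; omega
    rw [tsub_add_eq_add_tsub hle, h1, add_tsub_cancel_right]
  · intro p hp
    simp
  · intro p hp
    simp only [Finset.mem_filter, Finset.HasAntidiagonal.mem_antidiagonal] at hp
    obtain ⟨h1, h2⟩ := hp
    have hle : Finsupp.single i 1 ≤ p.1 := by
      rw [Finsupp.single_le_iff]; omega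
    simp [tsub_add_cancel_of_le hle]
  · intro p hp
    congr 2
    simp [Finsupp.add_apply, Finsupp.single_apply]

lemma swap_sum (n : σ →₀ ℕ) (F : (σ →₀ ℕ) → (σ →₀ ℕ) → R) :
    ∑ p ∈ (Finset.HasAntidiagonal.antidiagonal n : Finset ((σ →₀ ℕ) × (σ →₀ ℕ))), F p.1 p.2
      = ∑ p ∈ (Finset.HasAntidiagonal.antidiagonal n : Finset ((σ →₀ ℕ) × (σ →₀ ℕ))), F p.2 p.1 := by
  refine Finset.sum_nbij' (i := Prod.swap) (j := Prod.swap) ?_ ?_ ?_ ?_ ?_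
  · intro p hp
    simp only [Finset.HasAntidiagonal.mem_antidiagonal] at hp ⊢
    rw [Prod.fst_swap, Prod.snd_swap, add_comm]; exact hp
  · intro p hp
    simp only [Finset.HasAntidiagonal.mem_antidiagonal] at hp ⊢
    rw [Prod.fst_swap, Prod.snd_swap, add_comm]; exact hp
  · intro p _; rfl
  · intro p _; rfl
  · intro p _; rfl

lemma pd_mul (i : σ) (f g : MvPowerSeries σ R) :
    pd i (f * g) = pd i f * g + f * pd i g := by
  classical
  ext m
  have key : ∀ p ∈ (Finset.HasAntidiagonal.antidiagonal (m + Finsupp.single i 1) : Finset ((σ →₀ ℕ) × (σ →₀ ℕ))),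
      ((m i + 1 : ℕ) : R) * (MvPowerSeries.coeff p.1 f * MvPowerSeries.coeff p.2 g)
        = ((p.1 i : ℕ) : R) * (MvPowerSeries.coeff p.1 f * MvPowerSeries.coeff p.2 g)
          + ((p.2 i : ℕ) : R) * (MvPowerSeries.coeff p.1 f * MvPowerSeries.coeff p.2 g) := by
    intro p hp
    rw [Finset.HasAntidiagonal.mem_antidiagonal] at hp
    have : p.1 i + p.2 i = m i + 1 := by
      have := DFunLike.congr_fun hp i
      simpa [Finsupp.add_apply, Finsupp.single_apply] using this
    rw [← this]
    push_cast
    ring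
  calc MvPowerSeries.coeff m (pd i (f * g))
      = ∑ p ∈ (Finset.HasAntidiagonal.antidiagonal (m + Finsupp.single i 1) : Finset ((σ →₀ ℕ) × (σ →₀ ℕ))),
          ((m i + 1 : ℕ) : R) * (MvPowerSeries.coeff p.1 f * MvPowerSeries.coeff p.2 g) := by
        rw [coeff_pd, MvPowerSeries.coeff_mul, Finset.mul_sum]
    _ = ∑ p ∈ (Finset.HasAntidiagonal.antidiagonal (m + Finsupp.single i 1) : Finset ((σ →₀ ℕ) × (σ →₀ ℕ))),
          (((p.1 i : ℕ) : R) * (MvPowerSeries.coeff p.1 f * MvPowerSeries.coeff p.2 g)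
            + ((p.2 i : ℕ) : R) * (MvPowerSeries.coeff p.1 f * MvPowerSeries.coeff p.2 g)) :=
        Finset.sum_congr rfl key
    _ = (∑ p ∈ (Finset.HasAntidiagonal.antidiagonal (m + Finsupp.single i 1) : Finset ((σ →₀ ℕ) × (σ →₀ ℕ))),
          ((p.1 i : ℕ) : R) * (MvPowerSeries.coeff p.1 f * MvPowerSeries.coeff p.2 g))
        + ∑ p ∈ (Finset.HasAntidiagonal.antidiagonal (m + Finsupp.single i 1) : Finset ((σ →₀ ℕ) × (σ →₀ ℕ))),
          ((p.2 i : ℕ) : R) * (MvPowerSeries.coeff p.1 f * MvPowerSeries.coeff p.2 g) :=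
        Finset.sum_add_distrib
    _ = MvPowerSeries.coeff m (pd i f * g) + MvPowerSeries.coeff m (f * pd i g) := by
        congr 1
        · rw [shift_sum i m (fun p q => MvPowerSeries.coeff p f * MvPowerSeries.coeff q g),
            MvPowerSeries.coeff_mul]
          refine Finset.sum_congr rfl fun p _ => ?_
          rw [coeff_pd]
          ring
        · rw [← swap_sum _ (fun p q => ((p i : ℕ) : R) * (MvPowerSeries.coeff q f * MvPowerSeries.coeff p g)),
            shift_sum i m (fun p q => MvPowerSeries.coeff q f * MvPowerSeries.coeff p g),
            MvPowerSeries.coeff_mul,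
            swap_sum m (fun p q => MvPowerSeries.coeff p f * MvPowerSeries.coeff q (pd i g))]
          refine Finset.sum_congr rfl fun p _ => ?_
          rw [coeff_pd]
          ring
    _ = MvPowerSeries.coeff m (pd i f * g + f * pd i g) := by rw [map_add]

lemma pd_pow (i : σ) (f : MvPowerSeries σ R) (n : ℕ) :
    pd i (f ^ (n + 1)) = (n + 1) • (f ^ n * pd i f) := by
  induction n with
  | zero => simp [pd_mul, pd_one]
  | succ n ih =>
    rw [pow_succ (n := n + 1), pd_mul, ih, smul_mul_assoc, succ_nsmul (f ^ (n+1) * pd i f)]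
    congr 1
    rw [mul_right_comm, ← pow_succ]


lemma mdeg_add (p q : σ →₀ ℕ) : mdeg (p + q) = mdeg p + mdeg q := by
  unfold mdeg
  exact Finsupp.sum_add_index' (fun _ => rfl) (fun _ _ _ => rfl)

lemma mdeg_single (i : σ) : mdeg (Finsupp.single i 1) = 1 := by
  simp [mdeg]

lemma one_le_mdeg {p : σ →₀ ℕ} (hp : p ≠ 0) : 1 ≤ mdeg p := by
  obtain ⟨x, hx⟩ := Finsupp.ne_iff.mp hp
  simp only [Finsupp.coe_zero, Pi.zero_apply] at hx
  have hxs : x ∈ p.support := Finsupp.mem_support_iff.mpr hx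
  calc 1 ≤ p x := Nat.one_le_iff_ne_zero.mpr hx
    _ ≤ mdeg p := Finset.single_le_sum (f := fun y => p y) (fun y _ => Nat.zero_le _) hxs

lemma coeff_pow_eq_zero {u : MvPowerSeries σ R} (hu : MvPowerSeries.coeff 0 u = 0) :
    ∀ (k : ℕ) (m : σ →₀ ℕ), mdeg m < k → MvPowerSeries.coeff m (u ^ k) = 0 := by
  intro k
  induction k with
  | zero => intro m hm; omega
  | succ k ih =>
    intro m hm
    rw [pow_succ', MvPowerSeries.coeff_mul]
    refine Finset.sum_eq_zero fun p hp => ?_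
    rw [Finset.HasAntidiagonal.mem_antidiagonal] at hp
    by_cases h1 : p.1 = 0
    · rw [h1, hu, zero_mul]
    · have : mdeg p.2 < k := by
        have := mdeg_add p.1 p.2
        rw [hp] at this
        have := one_le_mdeg h1
        omega
      rw [ih p.2 this, mul_zero]

lemma coeff_fexp (u : MvPowerSeries σ ℚ) (hu : MvPowerSeries.coeff 0 u = 0) (m : σ →₀ ℕ)
    {N : ℕ} (hN : mdeg m + 1 ≤ N) :
    MvPowerSeries.coeff m (fexp u)
      = ∑ k ∈ Finset.range N, (k.factorial : ℚ)⁻¹ * MvPowerSeries.coeff m (u ^ k) := by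
  have h0 : MvPowerSeries.coeff m (fexp u)
      = ∑ k ∈ Finset.range (mdeg m + 1), (k.factorial : ℚ)⁻¹ • MvPowerSeries.coeff m (u ^ k) :=
    rfl
  rw [h0]
  simp only [smul_eq_mul]
  refine Finset.sum_subset (Finset.range_subset_range.mpr hN) ?_
  intro k _ hk
  rw [Finset.mem_range, not_lt] at hk
  rw [coeff_pow_eq_zero hu k m (by omega), mul_zero]

lemma pd_fexp (i : σ) (u : MvPowerSeries σ ℚ) (hu : MvPowerSeries.coeff 0 u = 0) :
    pd i (fexp u) = pd i u * fexp u := by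
  ext m
  have key : ∀ k : ℕ, ((m i + 1 : ℕ) : ℚ) * MvPowerSeries.coeff (m + Finsupp.single i 1) (u ^ (k + 1))
      = ((k : ℚ) + 1) * MvPowerSeries.coeff m (u ^ k * pd i u) := by
    intro k
    have h := congrArg (MvPowerSeries.coeff m) (pd_pow i u k)
    rw [coeff_pd, map_nsmul, nsmul_eq_mul] at h
    push_cast at h ⊢
    exact h
  calc MvPowerSeries.coeff m (pd i (fexp u))
      = ((m i + 1 : ℕ) : ℚ) * ∑ k ∈ Finset.range (mdeg m + 1 + 1),
          (k.factorial : ℚ)⁻¹ * MvPowerSeries.coeff (m + Finsupp.single i 1) (u ^ k) := by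
        rw [coeff_pd, coeff_fexp u hu _ (by rw [mdeg_add, mdeg_single])]
    _ = ∑ k ∈ Finset.range (mdeg m + 1),
          (k.factorial : ℚ)⁻¹ * MvPowerSeries.coeff m (u ^ k * pd i u) := by
        rw [Finset.mul_sum, Finset.sum_range_succ']
        have hz : ((m i + 1 : ℕ) : ℚ) * ((Nat.factorial 0 : ℚ)⁻¹
            * MvPowerSeries.coeff (m + Finsupp.single i 1) (u ^ 0)) = 0 := by
          rw [pow_zero, MvPowerSeries.coeff_one, if_neg (add_single_ne_zero i m)]
          ring
        rw [hz, add_zero]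
        refine Finset.sum_congr rfl fun k _ => ?_
        have hk := key k
        have hk1 : ((k : ℚ) + 1) ≠ 0 := by positivity
        have hkf : ((Nat.factorial k : ℚ)) ≠ 0 := Nat.cast_ne_zero.mpr k.factorial_ne_zero
        have hfac : ((Nat.factorial (k+1) : ℚ))⁻¹ * ((k : ℚ) + 1) = (Nat.factorial k : ℚ)⁻¹ := by
          rw [Nat.factorial_succ]
          push_cast
          field_simp
        calc ((m i + 1 : ℕ) : ℚ) * ((Nat.factorial (k+1) : ℚ)⁻¹
              * MvPowerSeries.coeff (m + Finsupp.single i 1) (u ^ (k + 1)))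
            = (Nat.factorial (k+1) : ℚ)⁻¹ * (((m i + 1 : ℕ) : ℚ)
              * MvPowerSeries.coeff (m + Finsupp.single i 1) (u ^ (k + 1))) := by ring
          _ = (Nat.factorial (k+1) : ℚ)⁻¹ * (((k:ℚ)+1)
              * MvPowerSeries.coeff m (u ^ k * pd i u)) := by rw [hk]
          _ = (Nat.factorial k : ℚ)⁻¹ * MvPowerSeries.coeff m (u ^ k * pd i u) := by
              rw [← hfac]; ring
    _ = MvPowerSeries.coeff m (pd i u * fexp u) := by
        rw [MvPowerSeries.coeff_mul]
        have hrw : ∀ p ∈ (Finset.HasAntidiagonal.antidiagonal m : Finset ((σ →₀ ℕ) × (σ →₀ ℕ))),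
            MvPowerSeries.coeff p.1 (pd i u) * MvPowerSeries.coeff p.2 (fexp u)
              = ∑ k ∈ Finset.range (mdeg m + 1),
                  (k.factorial : ℚ)⁻¹ * (MvPowerSeries.coeff p.1 (pd i u)
                    * MvPowerSeries.coeff p.2 (u ^ k)) := by
          intro p hp
          rw [Finset.HasAntidiagonal.mem_antidiagonal] at hp
          have h2 : mdeg p.2 + 1 ≤ mdeg m + 1 := by
            have := mdeg_add p.1 p.2
            rw [hp] at this
            omega
          rw [coeff_fexp u hu _ h2, Finset.mul_sum]
          exact Finset.sum_congr rfl fun k _ => by ring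
        rw [Finset.sum_congr rfl hrw, Finset.sum_comm]
        refine Finset.sum_congr rfl fun k _ => ?_
        rw [← Finset.mul_sum, ← MvPowerSeries.coeff_mul, mul_comm (u ^ k)]

lemma expArg_zero : MvPowerSeries.coeff 0 expArg = 0 := by
  have : expArg 0 = 0 := by
    apply finsum_eq_zero_of_forall_eq_zero
    intro a
    rw [if_neg]
    intro h
    have := DFunLike.congr_fun h (Sum.inr a)
    simp [Finsupp.single_apply] at this
  exact this

lemma pd_inr_expArg (b : ℕ) :
    pd (Sum.inr b) expArg
      = -(MvPowerSeries.monomial (Finsupp.single (Sum.inl ()) b) 1) := by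
  ext M
  rw [coeff_pd, map_neg, MvPowerSeries.coeff_monomial]
  by_cases hM : M = Finsupp.single (Sum.inl ()) b
  · rw [if_pos hM]
    subst hM
    have h1 : ((Finsupp.single (Sum.inl ()) b : (Unit ⊕ ℕ) →₀ ℕ)) (Sum.inr b) = 0 := by
      simp [Finsupp.single_apply]
    have h2 : MvPowerSeries.coeff
        (Finsupp.single (Sum.inl ()) b + Finsupp.single (Sum.inr b) 1) expArg = -1 := by
      have h3 : expArg (Finsupp.single (Sum.inl ()) b + Finsupp.single (Sum.inr b) 1)
          = -1 := by
        rw [show expArg (Finsupp.single (Sum.inl ()) b + Finsupp.single (Sum.inr b) 1)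
            = ∑ᶠ a : ℕ, if (Finsupp.single (Sum.inl ()) b + Finsupp.single (Sum.inr b) 1 :
              (Unit ⊕ ℕ) →₀ ℕ) = Finsupp.single (Sum.inl ()) a + Finsupp.single (Sum.inr a) 1
              then (-1 : ℚ) else 0 from rfl]
        rw [finsum_eq_single _ b ?_, if_pos rfl]
        intro a ha
        rw [if_neg]
        intro hEq
        have := DFunLike.congr_fun hEq (Sum.inr b)
        simp [Finsupp.single_apply, ha] at this
      exact h3
    rw [h2, h1]
    norm_num
  · rw [if_neg hM]
    have h0 : MvPowerSeries.coeff (M + Finsupp.single (Sum.inr b) 1) expArg = 0 := by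
      have h3 : expArg (M + Finsupp.single (Sum.inr b) 1) = 0 := by
        apply finsum_eq_zero_of_forall_eq_zero
        intro a
        rw [if_neg]
        intro hEq
        have hab : a = b := by
          by_contra hab
          have := DFunLike.congr_fun hEq (Sum.inr b)
          simp [Finsupp.single_apply, hab] at this
        subst hab
        exact hM (add_right_cancel hEq)
      exact h3
    rw [h0, mul_zero, neg_zero]

lemma res_apply {β : Type*} (m : (Unit ⊕ β) →₀ ℕ) (b : β) : res m b = m (Sum.inr b) := rfl

lemma genT_apply {β : Type*} {R : Type*} [CommRing R] (t : ℕ → MvPowerSeries β R)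
    (M : (Unit ⊕ β) →₀ ℕ) :
    MvPowerSeries.coeff M (genT t) = (if M = 0 then 1 else 0) -
      MvPowerSeries.coeff (res M) (t (M (Sum.inl ()) + 1)) := rfl

lemma res_add_inr {β : Type*} (M : (Unit ⊕ β) →₀ ℕ) (b : β) :
    res (M + Finsupp.single (Sum.inr b) 1) = res M + Finsupp.single b 1 := by
  ext x
  rw [Finsupp.add_apply, res_apply, res_apply, Finsupp.add_apply, Finsupp.single_apply,
    Finsupp.single_apply]
  congr 1
  simp [Sum.inr.injEq]

lemma coeff_pd_genT (t : ℕ → MvPowerSeries ℕ ℚ) (b : ℕ) (M : (Unit ⊕ ℕ) →₀ ℕ) :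
    MvPowerSeries.coeff M (pd (Sum.inr b) (genT t))
      = - MvPowerSeries.coeff (res M) (pd b (t (M (Sum.inl ()) + 1))) := by
  rw [coeff_pd, genT_apply, if_neg (add_single_ne_zero _ M), res_add_inr]
  have h1 : ((M + Finsupp.single (Sum.inr b) 1 : (Unit ⊕ ℕ) →₀ ℕ)) (Sum.inl ()) = M (Sum.inl ()) := by
    rw [Finsupp.add_apply, Finsupp.single_apply]
    simp
  have h2 : res M b = M (Sum.inr b) := rfl
  rw [h1, coeff_pd, res_apply]
  ring

theorem stmt2 (t : ℕ → MvPowerSeries ℕ ℚ) (ht : DefIdent t) (a d : ℕ)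
    (ha : 1 ≤ a) (hd : a + 1 ≤ d) :
    pd (a - 1) (t d) = pd a (t (d + 1)) := by
  have hG : genT t = fexp expArg := ht
  have hsym : pd (Sum.inr a) (genT t)
      = (MvPowerSeries.monomial (Finsupp.single (Sum.inl ()) 1) 1)
        * pd (Sum.inr (a - 1)) (genT t) := by
    have hmono : ((MvPowerSeries.monomial (Finsupp.single (Sum.inl ()) 1) 1)
        * (MvPowerSeries.monomial (Finsupp.single (Sum.inl ()) (a - 1)) 1)
          : MvPowerSeries (Unit ⊕ ℕ) ℚ)
        = MvPowerSeries.monomial (Finsupp.single (Sum.inl ()) a) (1 : ℚ) := by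
      rw [MvPowerSeries.monomial_mul_monomial, one_mul, ← Finsupp.single_add,
        show 1 + (a - 1) = a by omega]
    rw [hG, pd_fexp _ _ expArg_zero, pd_fexp _ _ expArg_zero, pd_inr_expArg, pd_inr_expArg,
      ← mul_assoc, mul_neg, hmono]
  ext n
  set M : (Unit ⊕ ℕ) →₀ ℕ :=
    Finsupp.mapDomain Sum.inr n + Finsupp.single (Sum.inl ()) d with hMdef
  have hMinl : M (Sum.inl ()) = d := by
    rw [hMdef, Finsupp.add_apply, Finsupp.mapDomain_notin_range, Finsupp.single_apply]
    · simp
    · rintro ⟨x, hx⟩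
      exact Sum.inr_ne_inl hx
  have hresM : res M = n := by
    ext b
    rw [res_apply, hMdef, Finsupp.add_apply, Finsupp.mapDomain_apply Sum.inr_injective,
      Finsupp.single_apply]
    simp
  set M' : (Unit ⊕ ℕ) →₀ ℕ :=
    Finsupp.mapDomain Sum.inr n + Finsupp.single (Sum.inl ()) (d - 1) with hM'def
  have hM'inl : M' (Sum.inl ()) = d - 1 := by
    rw [hM'def, Finsupp.add_apply, Finsupp.mapDomain_notin_range, Finsupp.single_apply]
    · simp
    · rintro ⟨x, hx⟩
      exact Sum.inr_ne_inl hx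
  have hresM' : res M' = n := by
    ext b
    rw [res_apply, hM'def, Finsupp.add_apply, Finsupp.mapDomain_apply Sum.inr_injective,
      Finsupp.single_apply]
    simp
  have hshift : MvPowerSeries.coeff M
      ((MvPowerSeries.monomial (Finsupp.single (Sum.inl ()) 1) 1)
        * pd (Sum.inr (a - 1)) (genT t))
      = MvPowerSeries.coeff M' (pd (Sum.inr (a - 1)) (genT t)) := by
    have hMM : M - Finsupp.single (Sum.inl ()) 1 = M' := by
      ext x
      rw [Finsupp.tsub_apply]
      rcases x with x | x
      · cases x
        rw [hMinl, hM'inl, Finsupp.single_apply, if_pos rfl]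
      · have e1 : M (Sum.inr x) = n x := by rw [← res_apply, hresM]
        have e2 : M' (Sum.inr x) = n x := by rw [← res_apply, hresM']
        rw [e1, e2, Finsupp.single_apply, if_neg (by simp)]
        omega
    rw [MvPowerSeries.coeff_monomial_mul, if_pos, one_mul, hMM]
    rw [Finsupp.single_le_iff, hMinl]
    omega
  have hc := congrArg (MvPowerSeries.coeff M) hsym
  rw [hshift, coeff_pd_genT, coeff_pd_genT, hMinl, hM'inl, hresM, hresM'] at hc
  have hd1 : d - 1 + 1 = d := by omega
  rw [hd1] at hc
  have := neg_injective hc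
  exact (this.symm)
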